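/- For every even n ≥ 10 there exists an n-vertex conjugated unicyclic graph G with τ(G) = 7n/2 − 3; hence the lower bound 7n/2 − 3 for the total-eccentricity index of n-vertex conjugated unicyclic graphs is attained. (Such a graph U̅_1 is obtained from the spider with center v and n/2 legs, of which n/2 − 1 legs have length 2 and one leg has length 1, by adding an edge between v and one vertex at distance 2 from v.) -/

import Mathlib

open SimpleGraph Finset

/-- The eccentricity of a vertex `v` in a graph `G`: the maximum distance from `v`
to any vertex of `G`. -/
noncomputable def ecc {V : Type} [Fintype V] (G : SimpleGraph V) (v : V) : ℕ :=
  Finset.univ.sup fun w => G.dist v w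

/-- The total-eccentricity index `τ(G) = ∑_{v ∈ V(G)} e_G(v)`. -/
noncomputable def totalEcc {V : Type} [Fintype V] (G : SimpleGraph V) : ℕ :=
  ∑ v : V, ecc G v

namespace AttainAux

/-- arithmetic adjacency predicate on vertex labels -/
def A (a b : ℕ) : Prop :=
  (a = 0 ∧ (b = 1 ∨ b = 3 ∨ (b % 2 = 0 ∧ b ≠ 0))) ∨
  (b = 0 ∧ (a = 1 ∨ a = 3 ∨ (a % 2 = 0 ∧ a ≠ 0))) ∨
  (a % 2 = 0 ∧ a ≠ 0 ∧ b = a + 1) ∨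
  (b % 2 = 0 ∧ b ≠ 0 ∧ a = b + 1)

def myG (n : ℕ) : SimpleGraph (Fin n) :=
  SimpleGraph.fromRel (fun a b =>
    (a.val = 0 ∧ (b.val = 1 ∨ b.val = 3 ∨ (b.val % 2 = 0 ∧ b.val ≠ 0))) ∨
    (a.val % 2 = 0 ∧ a.val ≠ 0 ∧ b.val = a.val + 1))

lemma adj_iff {n : ℕ} (x y : Fin n) : (myG n).Adj x y ↔ A x.val y.val := by
  simp only [myG, fromRel_adj, ne_eq, Fin.ext_iff]
  unfold A
  omega

lemma adj_of {n : ℕ} (x y : Fin n) (h : A x.val y.val) : (myG n).Adj x y :=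
  (adj_iff x y).mpr h

lemma reach_zero {n : ℕ} (x z : Fin n) (hz : z.val = 0) : (myG n).Reachable x z := by
  by_cases h0 : x.val = 0
  · have : x = z := Fin.ext (by omega)
    rw [this]
  by_cases hA : A x.val z.val
  · exact (adj_of x z hA).reachable
  · have hx : x.val % 2 = 1 ∧ 5 ≤ x.val := by unfold A at hA; omega
    have h1 : (myG n).Adj x ⟨x.val - 1, by omega⟩ :=
      adj_of _ _ (by show A x.val (x.val - 1); unfold A; omega)
    have h2 : (myG n).Adj ⟨x.val - 1, by omega⟩ z :=
      adj_of _ _ (by show A (x.val - 1) z.val; unfold A; omega)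
    exact h1.reachable.trans h2.reachable

lemma conn {n : ℕ} (hn : 10 ≤ n) : (myG n).Connected := by
  rw [connected_iff]
  refine ⟨fun u v => ?_, ⟨⟨0, by omega⟩⟩⟩
  exact (reach_zero u ⟨0, by omega⟩ rfl).trans (reach_zero v ⟨0, by omega⟩ rfl).symm

lemma dist_to_zero_le {n : ℕ} (x z : Fin n) (hz : z.val = 0) : (myG n).dist x z ≤ 2 := by
  by_cases h0 : x.val = 0
  · have : x = z := Fin.ext (by omega)
    simp [this, SimpleGraph.dist_self]
  by_cases hA : A x.val z.val
  · have h1 := SimpleGraph.dist_le ((adj_of x z hA).toWalk)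
    simp at h1; omega
  · have hx : x.val % 2 = 1 ∧ 5 ≤ x.val := by unfold A at hA; omega
    have h1 : (myG n).Adj x ⟨x.val - 1, by omega⟩ :=
      adj_of _ _ (by show A x.val (x.val - 1); unfold A; omega)
    have h2 : (myG n).Adj ⟨x.val - 1, by omega⟩ z :=
      adj_of _ _ (by show A (x.val - 1) z.val; unfold A; omega)
    have := SimpleGraph.dist_le (SimpleGraph.Walk.cons h1 (SimpleGraph.Walk.cons h2 SimpleGraph.Walk.nil))
    simpa using this

lemma le_dist_of {V : Type} {G : SimpleGraph V} {x y : V} (hr : G.Reachable x y) {c : ℕ}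
    (h : ∀ p : G.Walk x y, p.IsPath → c ≤ p.length) : c ≤ G.dist x y := by
  obtain ⟨p, hp, hl⟩ := hr.exists_path_of_dist
  exact hl ▸ h p hp


lemma two_le_dist {n : ℕ} (z y : Fin n) (hz : z.val = 0) (hy : y.val = 5) :
    2 ≤ (myG n).dist z y := by
  refine le_dist_of (reach_zero y z hz).symm ?_
  intro p hp
  cases p with
  | nil => omega
  | cons h q =>
    cases q with
    | nil =>
      rw [adj_iff] at h; unfold A at h; omega
    | cons h2 r => simp [SimpleGraph.Walk.length_cons]

lemma three_le_dist {n : ℕ} (x y : Fin n)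
    (hx : x.val = 1 ∨ x.val = 3 ∨ (x.val % 2 = 0 ∧ x.val ≠ 0))
    (hy : y.val % 2 = 1 ∧ 5 ≤ y.val ∧ y.val ≠ x.val + 1) :
    3 ≤ (myG n).dist x y := by
  refine le_dist_of ((reach_zero x ⟨0, by omega⟩ rfl).trans (reach_zero y ⟨0, by omega⟩ rfl).symm) ?_
  intro p hp
  cases p with
  | nil => omega
  | cons h q =>
    cases q with
    | nil => rw [adj_iff] at h; unfold A at h; omega
    | cons h2 r =>
      cases r with
      | nil =>
        rw [adj_iff] at h h2
        unfold A at h h2; omega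
      | cons h3 s => simp [SimpleGraph.Walk.length_cons]

lemma four_le_dist {n : ℕ} (x y : Fin n)
    (hx : x.val % 2 = 1 ∧ 5 ≤ x.val) (hy : y.val % 2 = 1 ∧ 5 ≤ y.val)
    (hxy : x.val ≠ y.val) :
    4 ≤ (myG n).dist x y := by
  have h05 : (0:ℕ) < n := by omega
  refine le_dist_of ((reach_zero x ⟨0, h05⟩ rfl).trans (reach_zero y ⟨0, h05⟩ rfl).symm) ?_
  intro p hp
  cases p with
  | nil => omega
  | cons h1 q =>
    cases q with
    | nil => rw [adj_iff] at h1; unfold A at h1; omega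
    | cons h2 r =>
      rename_i z1 z2
      rw [SimpleGraph.Walk.cons_isPath_iff] at hp
      have hxz2 : x.val ≠ z2.val := by
        intro hv
        have hxe : x = z2 := Fin.ext hv
        refine hp.2 ?_
        rw [SimpleGraph.Walk.support_cons, hxe]
        exact List.mem_cons_of_mem z1 r.start_mem_support
      have hz2 : z2.val = 0 := by
        rw [adj_iff] at h1 h2
        unfold A at h1 h2; omega
      cases r with
      | nil => omega
      | cons h3 s =>
        cases s with
        | nil => rw [adj_iff] at h3; unfold A at h3; omega
        | cons h4 t => simp [SimpleGraph.Walk.length_cons]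


def fval (m : ℕ) : ℕ := if m = 0 then 2 else if m % 2 = 1 ∧ 5 ≤ m then 4 else 3

lemma ecc_val {n : ℕ} (hn : 10 ≤ n) (x : Fin n) : ecc (myG n) x = fval x.val := by
  obtain ⟨z, hz⟩ : ∃ z : Fin n, z.val = 0 := ⟨⟨0, by omega⟩, rfl⟩
  obtain ⟨y5, hy5⟩ : ∃ y : Fin n, y.val = 5 := ⟨⟨5, by omega⟩, rfl⟩
  obtain ⟨y7, hy7⟩ : ∃ y : Fin n, y.val = 7 := ⟨⟨7, by omega⟩, rfl⟩
  by_cases h0 : x.val = 0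
  · have hxz : x = z := Fin.ext (by omega)
    have hub : ecc (myG n) x ≤ 2 := by
      refine Finset.sup_le fun w _ => ?_
      rw [SimpleGraph.dist_comm, hxz]
      exact dist_to_zero_le w z hz
    have hlb : 2 ≤ ecc (myG n) x := by
      refine le_trans ?_ (Finset.le_sup (Finset.mem_univ y5))
      rw [hxz]
      exact two_le_dist z y5 hz hy5
    unfold fval
    rw [if_pos h0]
    omega
  by_cases h1 : x.val = 1 ∨ x.val = 3 ∨ (x.val % 2 = 0 ∧ x.val ≠ 0)
  · have hadj : (myG n).Adj x z := adj_of x z (by rw [hz]; unfold A; omega)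
    have hub : ecc (myG n) x ≤ 3 := by
      refine Finset.sup_le fun w _ => ?_
      have ht := (conn hn).dist_triangle (u := x) (v := z) (w := w)
      have hxz : (myG n).dist x z ≤ 1 := by
        have := SimpleGraph.dist_le hadj.toWalk
        simpa using this
      have hzw : (myG n).dist z w ≤ 2 := by
        rw [SimpleGraph.dist_comm]
        exact dist_to_zero_le w z hz
      omega
    have hlb : 3 ≤ ecc (myG n) x := by
      by_cases h4 : x.val = 4
      · refine le_trans ?_ (Finset.le_sup (Finset.mem_univ y7))
        exact three_le_dist x y7 h1 (by rw [hy7]; omega)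
      · refine le_trans ?_ (Finset.le_sup (Finset.mem_univ y5))
        exact three_le_dist x y5 h1 (by rw [hy5]; omega)
    unfold fval
    rw [if_neg h0, if_neg (by omega)]
    omega
  · have hx : x.val % 2 = 1 ∧ 5 ≤ x.val := by omega
    have hub : ecc (myG n) x ≤ 4 := by
      refine Finset.sup_le fun w _ => ?_
      have ht := (conn hn).dist_triangle (u := x) (v := z) (w := w)
      have hxz : (myG n).dist x z ≤ 2 := dist_to_zero_le x z hz
      have hzw : (myG n).dist z w ≤ 2 := by
        rw [SimpleGraph.dist_comm]
        exact dist_to_zero_le w z hz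
      omega
    have hlb : 4 ≤ ecc (myG n) x := by
      by_cases h5 : x.val = 5
      · refine le_trans ?_ (Finset.le_sup (Finset.mem_univ y7))
        exact four_le_dist x y7 hx (by rw [hy7]; omega) (by omega)
      · refine le_trans ?_ (Finset.le_sup (Finset.mem_univ y5))
        exact four_le_dist x y5 hx (by rw [hy5]; omega) (by omega)
    unfold fval
    rw [if_neg h0, if_pos hx]
    omega


def f (n : ℕ) (hn : 10 ≤ n) (v : Fin n) : Sym2 (Fin n) :=
  if v.val = 0 then s(⟨0, by omega⟩, ⟨1, by omega⟩)
  else if v.val = 1 then s(⟨0, by omega⟩, ⟨3, by omega⟩)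
  else if v.val % 2 = 0 then s(⟨0, by omega⟩, v)
  else s(⟨v.val - 1, by omega⟩, v)

lemma f_eval0 {n : ℕ} (hn : 10 ≤ n) (v : Fin n) (h : v.val = 0) :
    f n hn v = s((⟨0, by omega⟩ : Fin n), (⟨1, by omega⟩ : Fin n)) := by
  unfold f; rw [if_pos h]

lemma f_eval1 {n : ℕ} (hn : 10 ≤ n) (v : Fin n) (h : v.val = 1) :
    f n hn v = s((⟨0, by omega⟩ : Fin n), (⟨3, by omega⟩ : Fin n)) := by
  unfold f; rw [if_neg (by omega), if_pos h]

lemma f_even {n : ℕ} (hn : 10 ≤ n) (v : Fin n) (h : v.val % 2 = 0) (h0 : v.val ≠ 0) :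
    f n hn v = s((⟨0, by omega⟩ : Fin n), v) := by
  unfold f; rw [if_neg h0, if_neg (by omega), if_pos h]

lemma f_odd {n : ℕ} (hn : 10 ≤ n) (v : Fin n) (h : v.val % 2 = 1) (h3 : 3 ≤ v.val) :
    f n hn v = s((⟨v.val - 1, by omega⟩ : Fin n), v) := by
  unfold f; rw [if_neg (by omega), if_neg (by omega), if_neg (by omega)]

lemma edge_range {n : ℕ} (hn : 10 ≤ n) :
    (myG n).edgeSet = Set.range (f n hn) := by
  ext e
  induction e using Sym2.ind with
  | _ a b =>
  simp only [mem_edgeSet, Set.mem_range]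
  constructor
  · intro h
    rw [adj_iff] at h
    unfold A at h
    rcases h with ⟨ha, hb | hb | hb⟩ | ⟨hb, ha | ha | ha⟩ | ⟨ha1, ha2, hb⟩ | ⟨hb1, hb2, ha⟩
    · refine ⟨a, ?_⟩
      rw [f_eval0 hn a ha, Sym2.eq_iff]
      exact Or.inl ⟨Fin.ext (by simpa using ha.symm), Fin.ext (by simpa using hb.symm)⟩
    · refine ⟨⟨1, by omega⟩, ?_⟩
      rw [f_eval1 hn ⟨1, by omega⟩ rfl, Sym2.eq_iff]
      exact Or.inl ⟨Fin.ext (by simpa using ha.symm), Fin.ext (by simpa using hb.symm)⟩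
    · refine ⟨b, ?_⟩
      rw [f_even hn b hb.1 hb.2, Sym2.eq_iff]
      exact Or.inl ⟨Fin.ext (by simpa using ha.symm), rfl⟩
    · refine ⟨b, ?_⟩
      rw [f_eval0 hn b hb, Sym2.eq_iff]
      exact Or.inr ⟨Fin.ext (by simpa using hb.symm), Fin.ext (by simpa using ha.symm)⟩
    · refine ⟨⟨1, by omega⟩, ?_⟩
      rw [f_eval1 hn ⟨1, by omega⟩ rfl, Sym2.eq_iff]
      exact Or.inr ⟨Fin.ext (by simpa using hb.symm), Fin.ext (by simpa using ha.symm)⟩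
    · refine ⟨a, ?_⟩
      rw [f_even hn a ha.1 ha.2, Sym2.eq_iff]
      exact Or.inr ⟨Fin.ext (by simpa using hb.symm), rfl⟩
    · refine ⟨b, ?_⟩
      rw [f_odd hn b (by omega) (by omega), Sym2.eq_iff]
      exact Or.inl ⟨Fin.ext (show b.val - 1 = a.val by omega), rfl⟩
    · refine ⟨a, ?_⟩
      rw [f_odd hn a (by omega) (by omega), Sym2.eq_iff]
      exact Or.inr ⟨Fin.ext (show a.val - 1 = b.val by omega), rfl⟩
  · rintro ⟨v, hv⟩
    rw [adj_iff]
    by_cases h0 : v.val = 0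
    · rw [f_eval0 hn v h0, Sym2.eq_iff] at hv
      rcases hv with ⟨h1', h2'⟩ | ⟨h1', h2'⟩ <;> subst h1' <;> subst h2'
      · show A 0 1; unfold A; omega
      · show A 1 0; unfold A; omega
    · by_cases h1 : v.val = 1
      · rw [f_eval1 hn v h1, Sym2.eq_iff] at hv
        rcases hv with ⟨h1', h2'⟩ | ⟨h1', h2'⟩ <;> subst h1' <;> subst h2'
        · show A 0 3; unfold A; omega
        · show A 3 0; unfold A; omega
      · by_cases h2 : v.val % 2 = 0
        · rw [f_even hn v h2 h0, Sym2.eq_iff] at hv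
          rcases hv with ⟨h1', h2'⟩ | ⟨h1', h2'⟩ <;> subst h1' <;> subst h2'
          · show A 0 v.val; unfold A; omega
          · show A v.val 0; unfold A; omega
        · rw [f_odd hn v (by omega) (by omega), Sym2.eq_iff] at hv
          rcases hv with ⟨h1', h2'⟩ | ⟨h1', h2'⟩ <;> subst h1' <;> subst h2'
          · show A (v.val - 1) v.val; unfold A; omega
          · show A v.val (v.val - 1); unfold A; omega


def g {n : ℕ} : Sym2 (Fin n) → ℕ :=
  Sym2.lift ⟨fun a b =>
    if max a.val b.val = 1 then 0
    else if min a.val b.val = 0 ∧ max a.val b.val = 3 then 1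
    else max a.val b.val,
    by intro a b; simp only [Nat.max_comm, Nat.min_comm]⟩

lemma g_f {n : ℕ} (hn : 10 ≤ n) (v : Fin n) : g (f n hn v) = v.val := by
  by_cases h0 : v.val = 0
  · rw [f_eval0 hn v h0]
    show (if max 0 1 = 1 then 0 else if min 0 1 = 0 ∧ max 0 1 = 3 then 1 else max 0 1) = v.val
    simp [h0]
  · by_cases h1 : v.val = 1
    · rw [f_eval1 hn v h1]
      show (if max 0 3 = 1 then 0 else if min 0 3 = 0 ∧ max 0 3 = 3 then 1 else max 0 3) = v.val
      simp [h1]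
    · by_cases h2 : v.val % 2 = 0
      · rw [f_even hn v h2 h0]
        show (if max 0 v.val = 1 then 0
          else if min 0 v.val = 0 ∧ max 0 v.val = 3 then 1 else max 0 v.val) = v.val
        rw [if_neg (by omega), if_neg (by omega)]
        omega
      · rw [f_odd hn v (by omega) (by omega)]
        show (if max (v.val - 1) v.val = 1 then 0
          else if min (v.val - 1) v.val = 0 ∧ max (v.val - 1) v.val = 3 then 1
          else max (v.val - 1) v.val) = v.val
        rw [if_neg (by omega), if_neg (by omega)]
        omega

lemma f_inj {n : ℕ} (hn : 10 ≤ n) : Function.Injective (f n hn) := by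
  intro v w h
  apply Fin.ext
  rw [← g_f hn v, ← g_f hn w, h]

lemma edge_count {n : ℕ} (hn : 10 ≤ n) : (myG n).edgeSet.ncard = n := by
  rw [edge_range hn, ← Set.image_univ, Set.ncard_image_of_injective _ (f_inj hn),
    Set.ncard_univ, Nat.card_eq_fintype_card, Fintype.card_fin]

lemma matching {n : ℕ} (hn : 10 ≤ n) (he : n % 2 = 0) :
    ∃ M : (myG n).Subgraph, M.IsPerfectMatching := by
  refine ⟨{ verts := Set.univ,
            Adj := fun a b => a.val / 2 = b.val / 2 ∧ a.val ≠ b.val,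
            adj_sub := ?_,
            edge_vert := fun _ => Set.mem_univ _,
            symm := ⟨fun a b hab => ⟨hab.1.symm, hab.2.symm⟩⟩ }, ?_⟩
  · intro a b hab
    exact adj_of a b (by unfold A; omega)
  · rw [SimpleGraph.Subgraph.isPerfectMatching_iff]
    intro v
    by_cases hv : v.val % 2 = 0
    · refine ⟨⟨v.val + 1, by omega⟩, ⟨by show v.val / 2 = (v.val + 1) / 2; omega,
        by show v.val ≠ v.val + 1; omega⟩, ?_⟩
      rintro w ⟨hw1, hw2⟩
      apply Fin.ext
      show w.val = v.val + 1
      omega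
    · refine ⟨⟨v.val - 1, by omega⟩, ⟨by show v.val / 2 = (v.val - 1) / 2; omega,
        by show v.val ≠ v.val - 1; omega⟩, ?_⟩
      rintro w ⟨hw1, hw2⟩
      apply Fin.ext
      show w.val = v.val - 1
      omega

lemma sum_fval (k : ℕ) : ∑ m ∈ Finset.range (2 * (k + 2)), fval m = 7 * (k + 2) - 3 := by
  induction k with
  | zero => decide
  | succ k ih =>
    have h1 : 2 * (k + 1 + 2) = (2 * (k + 2)) + 1 + 1 := by ring
    rw [h1, Finset.sum_range_succ, Finset.sum_range_succ, ih]
    have h2 : fval (2 * (k + 2)) = 3 := by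
      unfold fval; rw [if_neg (by omega), if_neg (by omega)]
    have h3 : fval (2 * (k + 2) + 1) = 4 := by
      unfold fval; rw [if_neg (by omega), if_pos (by omega)]
    rw [h2, h3]
    omega

end AttainAux


/-- For every even `n ≥ 10`, there is an `n`-vertex conjugated unicyclic graph whose
total-eccentricity index equals `7n/2 - 3`; i.e. the lower bound is attained. -/
theorem conjugated_unicyclic_lower_bound_attained (n : ℕ) (hn : 10 ≤ n) (hev : Even n) :
    ∃ G : SimpleGraph (Fin n), G.Connected ∧ G.edgeSet.ncard = n ∧
      (∃ M : G.Subgraph, M.IsPerfectMatching) ∧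
      (totalEcc G : ℚ) = 7 * n / 2 - 3 := by
  obtain ⟨j, hj⟩ := hev
  refine ⟨AttainAux.myG n, AttainAux.conn hn, AttainAux.edge_count hn,
    AttainAux.matching hn (by omega), ?_⟩
  have h1 : totalEcc (AttainAux.myG n) = ∑ v : Fin n, AttainAux.fval v.val := by
    unfold totalEcc
    exact Finset.sum_congr rfl fun v _ => AttainAux.ecc_val hn v
  have h2 : ∑ v : Fin n, AttainAux.fval v.val = ∑ m ∈ Finset.range n, AttainAux.fval m :=
    Fin.sum_univ_eq_sum_range _ n
  have hn2 : n = 2 * ((j - 2) + 2) := by omega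
  have h3 : ∑ m ∈ Finset.range n, AttainAux.fval m = 7 * ((j - 2) + 2) - 3 := by
    rw [hn2]; exact AttainAux.sum_fval (j - 2)
  rw [h1, h2, h3, Nat.cast_sub (by omega), hn2]
  push_cast
  ring
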